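/- Specialization of the weighted Opial inequality at r = 2: Under the kernel domination hypothesis |y(x)| ≤ ∫ₐˣ Φ(x,t)|h(t)| dt, with β > 0, 0 < α < 2, u ≥ 0 and v > 0 continuous on I, one has ∫ₐˣ u(s)|y(s)|^β |h(s)|^α ds ≤ C̃(x) (∫ₐˣ v(s)|h(s)|² ds)^{(α+β)/2}, where C̃(x) = (α/(α+β))^{α/2} (∫ₐˣ (u(s)² v(s)^{-α})^{1/(2-α)} P̃(s)^{β/(2-α)} ds)^{(2-α)/2} and P̃(s) = ∫ₐˢ v(t)^{-1} Φ(s,t)² dt. -/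

import Mathlib

open intervalIntegral MeasureTheory

set_option maxHeartbeats 1000000

private lemma opial_memLp {f : ℝ → ℝ} (hf : Continuous f) (a x : ℝ) (p : ENNReal) :
    MemLp f p (volume.restrict (Set.Ioc a x)) := by
  haveI : IsFiniteMeasure (volume.restrict (Set.Ioc a x)) :=
    ⟨by rw [Measure.restrict_apply_univ]; exact measure_Ioc_lt_top⟩
  obtain ⟨C, hC⟩ :=
    (isCompact_Icc (a := a) (b := x)).exists_bound_of_continuousOn hf.continuousOn
  refine MemLp.of_bound hf.aestronglyMeasurable.restrict C ?_
  exact (ae_restrict_iff' measurableSet_Ioc).2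
    (Filter.Eventually.of_forall fun t ht => hC t (Set.Ioc_subset_Icc_self ht))

private theorem opial_main (a x : ℝ) (hax : a ≤ x) (Φ : ℝ → ℝ → ℝ)
    (hΦc : Continuous fun p : ℝ × ℝ => Φ p.1 p.2)
    (hΦ0 : ∀ s t, 0 ≤ Φ s t)
    (y h u v : ℝ → ℝ)
    (hy : Continuous y) (hh : Continuous h) (hu : Continuous u) (hv : Continuous v)
    (hu0 : ∀ s, 0 ≤ u s) (hv0 : ∀ s, 0 < v s)
    (hdom : ∀ s ∈ Set.Icc a x, |y s| ≤ ∫ t in a..s, Φ s t * |h t|)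
    (α β : ℝ) (hα : 0 < α) (hα2 : α < 2) (hβ : 0 < β) :
    ∫ s in a..x, u s * |y s| ^ β * |h s| ^ α ≤
      ((α / (α + β)) ^ (α / 2) *
        (∫ s in a..x, (u s ^ (2:ℝ) * v s ^ (-α)) ^ (1 / (2 - α)) *
            (∫ t in a..s, v t ^ (-(1:ℝ)) * Φ s t ^ (2:ℝ)) ^ (β / (2 - α)))
          ^ ((2 - α) / 2)) *
      (∫ s in a..x, v s * |h s| ^ (2:ℝ)) ^ ((α + β) / 2) := by
  classical
  have h2α : (0:ℝ) < 2 - α := by linarith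
  -- the weight `w = v |h|²` and its primitive `z`
  set w : ℝ → ℝ := fun t => v t * |h t| ^ (2:ℝ) with hw
  have hwc : Continuous w :=
    hv.mul ((hh.abs).rpow_const fun s => Or.inr (by norm_num))
  have hw0 : ∀ t, 0 ≤ w t := fun t =>
    mul_nonneg (hv0 t).le (Real.rpow_nonneg (abs_nonneg _) _)
  set z : ℝ → ℝ := fun s => ∫ t in a..s, w t with hz
  have hzc : Continuous z :=
    intervalIntegral.continuous_primitive (fun c d => hwc.intervalIntegrable c d) a
  have hzd : ∀ s, HasDerivAt z (w s) s := fun s =>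
    (hwc.integral_hasStrictDerivAt a s).hasDerivAt
  have hz0 : ∀ s, a ≤ s → 0 ≤ z s := fun s hs =>
    intervalIntegral.integral_nonneg hs fun t _ => hw0 t
  -- the kernel integral `P`
  set P : ℝ → ℝ := fun s => ∫ t in a..s, v t ^ (-(1:ℝ)) * Φ s t ^ (2:ℝ) with hP
  have hPic : Continuous fun p : ℝ × ℝ => v p.2 ^ (-(1:ℝ)) * Φ p.1 p.2 ^ (2:ℝ) :=
    ((hv.comp continuous_snd).rpow_const fun p => Or.inl (hv0 _).ne').mul
      (hΦc.rpow_const fun p => Or.inr (by norm_num))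
  have hPc : Continuous P := by
    rw [hP]
    exact intervalIntegral.continuous_parametric_intervalIntegral_of_continuous
      (f := fun s t => v t ^ (-(1:ℝ)) * Φ s t ^ (2:ℝ)) (μ := volume) hPic continuous_id
  have hP0 : ∀ s, a ≤ s → 0 ≤ P s := fun s hs =>
    intervalIntegral.integral_nonneg hs fun t _ =>
      mul_nonneg (Real.rpow_nonneg (hv0 t).le _) (Real.rpow_nonneg (hΦ0 s t) _)
  -- Cauchy–Schwarz: |y s| ≤ P s ^ (1/2) * z s ^ (1/2)
  have hconj : Real.HolderConjugate 2 2 := Real.holderConjugate_iff.mpr ⟨one_lt_two, by norm_num⟩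
  have hCS : ∀ s ∈ Set.Icc a x, |y s| ≤ P s ^ ((1:ℝ)/2) * z s ^ ((1:ℝ)/2) := by
    intro s hs
    have has : a ≤ s := hs.1
    set f : ℝ → ℝ := fun t => v t ^ (-(1:ℝ)/2) * Φ s t with hf
    set g : ℝ → ℝ := fun t => v t ^ ((1:ℝ)/2) * |h t| with hg
    have hfc : Continuous f := by
      rw [hf]
      exact (hv.rpow_const fun t => Or.inl (hv0 t).ne').mul
        (hΦc.comp (continuous_const.prodMk continuous_id))
    have hgc : Continuous g := by
      rw [hg]
      exact (hv.rpow_const fun t => Or.inl (hv0 t).ne').mul hh.abs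
    have hf0 : ∀ t, 0 ≤ f t := fun t =>
      mul_nonneg (Real.rpow_nonneg (hv0 t).le _) (hΦ0 s t)
    have hg0 : ∀ t, 0 ≤ g t := fun t =>
      mul_nonneg (Real.rpow_nonneg (hv0 t).le _) (abs_nonneg _)
    have key := MeasureTheory.integral_mul_le_Lp_mul_Lq_of_nonneg
      (μ := MeasureTheory.volume.restrict (Set.Ioc a s)) hconj
      (Filter.Eventually.of_forall hf0) (Filter.Eventually.of_forall hg0)
      (opial_memLp hfc a s _) (opial_memLp hgc a s _)
    have hfg : ∀ t, f t * g t = Φ s t * |h t| := by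
      intro t
      have h1 : v t ^ (-(1:ℝ)/2) * v t ^ ((1:ℝ)/2) = 1 := by
        rw [← Real.rpow_add (hv0 t)]; norm_num
      calc f t * g t
          = (v t ^ (-(1:ℝ)/2) * v t ^ ((1:ℝ)/2)) * (Φ s t * |h t|) := by
            rw [hf, hg]; ring
        _ = Φ s t * |h t| := by rw [h1, one_mul]
    have hf2 : ∀ t, f t ^ (2:ℝ) = v t ^ (-(1:ℝ)) * Φ s t ^ (2:ℝ) := by
      intro t
      rw [hf]
      rw [Real.mul_rpow (Real.rpow_nonneg (hv0 t).le _) (hΦ0 s t),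
        ← Real.rpow_mul (hv0 t).le]
      norm_num
    have hg2 : ∀ t, g t ^ (2:ℝ) = w t := by
      intro t
      rw [hg, hw]
      rw [Real.mul_rpow (Real.rpow_nonneg (hv0 t).le _) (abs_nonneg _),
        ← Real.rpow_mul (hv0 t).le]
      norm_num
    have e0 : (∫ t in a..s, Φ s t * |h t|) = ∫ t in Set.Ioc a s, f t * g t := by
      rw [← intervalIntegral.integral_of_le has]
      exact intervalIntegral.integral_congr fun t _ => (hfg t).symm
    have e1 : (∫ t in Set.Ioc a s, f t ^ (2:ℝ)) = P s := by
      rw [hP, ← intervalIntegral.integral_of_le has]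
      exact intervalIntegral.integral_congr fun t _ => hf2 t
    have e2 : (∫ t in Set.Ioc a s, g t ^ (2:ℝ)) = z s := by
      rw [hz, ← intervalIntegral.integral_of_le has]
      exact intervalIntegral.integral_congr fun t _ => hg2 t
    calc |y s| ≤ ∫ t in a..s, Φ s t * |h t| := hdom s hs
      _ = ∫ t in Set.Ioc a s, f t * g t := e0
      _ ≤ (∫ t in Set.Ioc a s, f t ^ (2:ℝ)) ^ ((1:ℝ)/2) *
            (∫ t in Set.Ioc a s, g t ^ (2:ℝ)) ^ ((1:ℝ)/2) := key
      _ = P s ^ ((1:ℝ)/2) * z s ^ ((1:ℝ)/2) := by rw [e1, e2]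
  -- pointwise bound and the two Hölder factors
  set f1 : ℝ → ℝ := fun s => u s * v s ^ (-(α/2)) * P s ^ (β/2) with hf1
  set g1 : ℝ → ℝ := fun s => z s ^ (β/2) * (v s ^ (α/2) * |h s| ^ α) with hg1
  have hf1c : Continuous f1 := by
    rw [hf1]
    exact (hu.mul (hv.rpow_const fun t => Or.inl (hv0 t).ne')).mul
      (hPc.rpow_const fun t => Or.inr (by positivity))
  have hg1c : Continuous g1 := by
    rw [hg1]
    exact (hzc.rpow_const fun t => Or.inr (by positivity)).mul
      ((hv.rpow_const fun t => Or.inl (hv0 t).ne').mul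
        ((hh.abs).rpow_const fun t => Or.inr hα.le))
  have hvone : ∀ s, v s ^ (-(α/2)) * v s ^ (α/2) = 1 := by
    intro s
    rw [← Real.rpow_add (hv0 s)]
    norm_num
  have hpt : ∀ s ∈ Set.Icc a x, u s * |y s| ^ β * |h s| ^ α ≤ f1 s * g1 s := by
    intro s hs
    have hPs : 0 ≤ P s := hP0 s hs.1
    have hzs : 0 ≤ z s := hz0 s hs.1
    have hyb : |y s| ^ β ≤ P s ^ (β/2) * z s ^ (β/2) := by
      have e : (P s ^ ((1:ℝ)/2) * z s ^ ((1:ℝ)/2)) ^ β = P s ^ (β/2) * z s ^ (β/2) := by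
        rw [Real.mul_rpow (Real.rpow_nonneg hPs _) (Real.rpow_nonneg hzs _),
          ← Real.rpow_mul hPs, ← Real.rpow_mul hzs,
          show (1:ℝ)/2 * β = β/2 from by ring]
      calc |y s| ^ β ≤ (P s ^ ((1:ℝ)/2) * z s ^ ((1:ℝ)/2)) ^ β :=
            Real.rpow_le_rpow (abs_nonneg _) (hCS s hs) hβ.le
        _ = P s ^ (β/2) * z s ^ (β/2) := e
    have e2 : f1 s * g1 s = u s * (P s ^ (β/2) * z s ^ (β/2)) * |h s| ^ α := by
      rw [hf1, hg1]
      calc u s * v s ^ (-(α/2)) * P s ^ (β/2) * (z s ^ (β/2) * (v s ^ (α/2) * |h s| ^ α))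
          = (v s ^ (-(α/2)) * v s ^ (α/2)) * (u s * (P s ^ (β/2) * z s ^ (β/2)) * |h s| ^ α) := by
            ring
        _ = u s * (P s ^ (β/2) * z s ^ (β/2)) * |h s| ^ α := by rw [hvone s, one_mul]
    rw [e2]
    exact mul_le_mul_of_nonneg_right (mul_le_mul_of_nonneg_left hyb (hu0 s))
      (Real.rpow_nonneg (abs_nonneg _) _)
  -- Hölder with exponents 2/(2-α) and 2/α
  have hconj2 : Real.HolderConjugate (2/(2-α)) (2/α) := by
    rw [Real.holderConjugate_iff]
    constructor
    · rw [lt_div_iff₀ h2α]; linarith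
    · rw [inv_div, inv_div]; ring
  have hf1nn : 0 ≤ᵐ[MeasureTheory.volume.restrict (Set.Ioc a x)] f1 := by
    refine (MeasureTheory.ae_restrict_iff' measurableSet_Ioc).2
      (Filter.Eventually.of_forall fun s hs => ?_)
    exact mul_nonneg (mul_nonneg (hu0 s) (Real.rpow_nonneg (hv0 s).le _))
      (Real.rpow_nonneg (hP0 s hs.1.le) _)
  have hg1nn : 0 ≤ᵐ[MeasureTheory.volume.restrict (Set.Ioc a x)] g1 := by
    refine (MeasureTheory.ae_restrict_iff' measurableSet_Ioc).2
      (Filter.Eventually.of_forall fun s hs => ?_)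
    exact mul_nonneg (Real.rpow_nonneg (hz0 s hs.1.le) _)
      (mul_nonneg (Real.rpow_nonneg (hv0 s).le _) (Real.rpow_nonneg (abs_nonneg _) _))
  have key2 := MeasureTheory.integral_mul_le_Lp_mul_Lq_of_nonneg
    (μ := MeasureTheory.volume.restrict (Set.Ioc a x)) hconj2 hf1nn hg1nn
    (opial_memLp hf1c a x _) (opial_memLp hg1c a x _)
  -- identify the first Hölder factor
  have hf1p : ∀ s ∈ Set.Ioc a x, f1 s ^ (2/(2-α)) =
      (u s ^ (2:ℝ) * v s ^ (-α)) ^ (1 / (2 - α)) * P s ^ (β / (2 - α)) := by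
    intro s hs
    have hPs : 0 ≤ P s := hP0 s hs.1.le
    rw [hf1]
    rw [Real.mul_rpow (mul_nonneg (hu0 s) (Real.rpow_nonneg (hv0 s).le _))
        (Real.rpow_nonneg hPs _),
      Real.mul_rpow (hu0 s) (Real.rpow_nonneg (hv0 s).le _),
      ← Real.rpow_mul hPs, ← Real.rpow_mul (hv0 s).le,
      Real.mul_rpow (Real.rpow_nonneg (hu0 s) _) (Real.rpow_nonneg (hv0 s).le _),
      ← Real.rpow_mul (hu0 s), ← Real.rpow_mul (hv0 s).le,
      show (2:ℝ) * (1/(2-α)) = 2/(2-α) from by ring,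
      show -α * (1/(2-α)) = -(α/2) * (2/(2-α)) from by ring,
      show β/2 * (2/(2-α)) = β/(2-α) from by ring]
  have e3 : (∫ s in Set.Ioc a x, f1 s ^ (2/(2-α))) =
      ∫ s in a..x, (u s ^ (2:ℝ) * v s ^ (-α)) ^ (1 / (2 - α)) *
        (∫ t in a..s, v t ^ (-(1:ℝ)) * Φ s t ^ (2:ℝ)) ^ (β / (2 - α)) := by
    rw [intervalIntegral.integral_of_le hax]
    refine MeasureTheory.setIntegral_congr_fun measurableSet_Ioc fun s hs => ?_
    rw [hf1p s hs, hP]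
  -- identify the second Hölder factor
  have hg1q : ∀ s ∈ Set.Ioc a x, g1 s ^ (2/α) = z s ^ (β/α) * w s := by
    intro s hs
    have hzs : 0 ≤ z s := hz0 s hs.1.le
    rw [hg1, hw]
    rw [Real.mul_rpow (Real.rpow_nonneg hzs _)
        (mul_nonneg (Real.rpow_nonneg (hv0 s).le _) (Real.rpow_nonneg (abs_nonneg _) _)),
      Real.mul_rpow (Real.rpow_nonneg (hv0 s).le _) (Real.rpow_nonneg (abs_nonneg _) _),
      ← Real.rpow_mul hzs, ← Real.rpow_mul (hv0 s).le, ← Real.rpow_mul (abs_nonneg _),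
      show β/2 * (2/α) = β/α from by ring,
      show α/2 * (2/α) = 1 from by field_simp,
      show α * (2/α) = 2 from by field_simp,
      Real.rpow_one]
  have e4 : (∫ s in Set.Ioc a x, g1 s ^ (2/α)) = ∫ s in a..x, z s ^ (β/α) * w s := by
    rw [intervalIntegral.integral_of_le hax]
    exact MeasureTheory.setIntegral_congr_fun measurableSet_Ioc fun s hs => hg1q s hs
  -- compute the second factor by the substitution `t = z s`
  have hgc : Continuous fun t : ℝ => t ^ (β/α) :=
    continuous_iff_continuousAt.2 fun t =>
      Real.continuousAt_rpow_const _ _ (Or.inr (by positivity))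
  have hsubst := intervalIntegral.integral_comp_smul_deriv (a := a) (b := x)
    (f := z) (f' := w) (g := fun t => t ^ (β/α)) (fun s _ => hzd s) hwc.continuousOn hgc
  have hza : z a = 0 := by rw [hz]; exact intervalIntegral.integral_same
  have hD : (∫ s in a..x, z s ^ (β/α) * w s) = z x ^ ((α+β)/α) * (α/(α+β)) := by
    have hne : β/α + 1 ≠ 0 := by positivity
    calc (∫ s in a..x, z s ^ (β/α) * w s)
        = ∫ s in a..x, w s • ((fun t : ℝ => t ^ (β/α)) ∘ z) s := by
          refine intervalIntegral.integral_congr fun s _ => ?_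
          simp [Function.comp, smul_eq_mul, mul_comm]
      _ = ∫ t in z a..z x, t ^ (β/α) := hsubst
      _ = (z x ^ (β/α + 1) - (0:ℝ) ^ (β/α + 1)) / (β/α + 1) := by
          rw [hza]
          exact integral_rpow (Or.inl (neg_one_lt_zero.trans (div_pos hβ hα)))
      _ = z x ^ ((α+β)/α) * (α/(α+β)) := by
          rw [Real.zero_rpow hne, sub_zero,
            show β/α + 1 = (α+β)/α from by field_simp; ring, div_eq_mul_inv, inv_div]
  -- assemble
  have hint1 : IntervalIntegrable (fun s => u s * |y s| ^ β * |h s| ^ α)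
      MeasureTheory.volume a x :=
    ((hu.mul ((hy.abs).rpow_const fun t => Or.inr hβ.le)).mul
      ((hh.abs).rpow_const fun t => Or.inr hα.le)).intervalIntegrable a x
  have hint2 : IntervalIntegrable (fun s => f1 s * g1 s) MeasureTheory.volume a x :=
    (hf1c.mul hg1c).intervalIntegrable a x
  have step1 : (∫ s in a..x, u s * |y s| ^ β * |h s| ^ α) ≤ ∫ s in a..x, f1 s * g1 s :=
    intervalIntegral.integral_mono_on hax hint1 hint2 hpt
  have hzx : 0 ≤ z x := hz0 x hax
  have hAnn : 0 ≤ ∫ s in a..x, (u s ^ (2:ℝ) * v s ^ (-α)) ^ (1 / (2 - α)) *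
      (∫ t in a..s, v t ^ (-(1:ℝ)) * Φ s t ^ (2:ℝ)) ^ (β / (2 - α)) := by
    rw [← e3, intervalIntegral.integral_of_le hax] at *
    exact MeasureTheory.setIntegral_nonneg measurableSet_Ioc fun s hs =>
      Real.rpow_nonneg (by
        exact mul_nonneg (mul_nonneg (hu0 s) (Real.rpow_nonneg (hv0 s).le _))
          (Real.rpow_nonneg (hP0 s hs.1.le) _)) _
  have step2 : (∫ s in a..x, f1 s * g1 s) ≤
      (∫ s in a..x, (u s ^ (2:ℝ) * v s ^ (-α)) ^ (1 / (2 - α)) *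
          (∫ t in a..s, v t ^ (-(1:ℝ)) * Φ s t ^ (2:ℝ)) ^ (β / (2 - α))) ^ ((2-α)/2) *
        (z x ^ ((α+β)/α) * (α/(α+β))) ^ (α/2) := by
    rw [intervalIntegral.integral_of_le hax]
    calc (∫ s in Set.Ioc a x, f1 s * g1 s)
        ≤ (∫ s in Set.Ioc a x, f1 s ^ (2/(2-α))) ^ (1/(2/(2-α))) *
          (∫ s in Set.Ioc a x, g1 s ^ (2/α)) ^ (1/(2/α)) := key2
      _ = _ := by
          rw [e3, e4, hD, one_div_div, one_div_div]
  have efin : (z x ^ ((α+β)/α) * (α/(α+β))) ^ (α/2) =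
      (α/(α+β)) ^ (α/2) * z x ^ ((α+β)/2) := by
    rw [Real.mul_rpow (Real.rpow_nonneg hzx _) (by positivity),
      ← Real.rpow_mul hzx, show (α+β)/α * (α/2) = (α+β)/2 from by field_simp,
      mul_comm]
  calc (∫ s in a..x, u s * |y s| ^ β * |h s| ^ α)
      ≤ ∫ s in a..x, f1 s * g1 s := step1
    _ ≤ (∫ s in a..x, (u s ^ (2:ℝ) * v s ^ (-α)) ^ (1 / (2 - α)) *
          (∫ t in a..s, v t ^ (-(1:ℝ)) * Φ s t ^ (2:ℝ)) ^ (β / (2 - α))) ^ ((2-α)/2) *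
        (z x ^ ((α+β)/α) * (α/(α+β))) ^ (α/2) := step2
    _ = ((α / (α + β)) ^ (α / 2) *
          (∫ s in a..x, (u s ^ (2:ℝ) * v s ^ (-α)) ^ (1 / (2 - α)) *
            (∫ t in a..s, v t ^ (-(1:ℝ)) * Φ s t ^ (2:ℝ)) ^ (β / (2 - α))) ^ ((2 - α) / 2)) *
        z x ^ ((α + β) / 2) := by rw [efin]; ring
    _ = _ := by rw [hz, hw]

/-- Weighted Opial inequality for general kernels, specialization `r = 2`. -/
theorem weighted_opial_general_kernel_r_two (a b : ℝ) (hab : a ≤ b)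
    (Φ : ℝ → ℝ → ℝ)
    (hΦc : ContinuousOn (fun p : ℝ × ℝ => Φ p.1 p.2) (Set.Icc a b ×ˢ Set.Icc a b))
    (hΦ0 : ∀ s ∈ Set.Icc a b, ∀ t ∈ Set.Icc a b, 0 ≤ Φ s t)
    (y h u v : ℝ → ℝ)
    (hy : ContinuousOn y (Set.Icc a b)) (hh : ContinuousOn h (Set.Icc a b))
    (hu : ContinuousOn u (Set.Icc a b)) (hv : ContinuousOn v (Set.Icc a b))
    (hu0 : ∀ s ∈ Set.Icc a b, 0 ≤ u s) (hv0 : ∀ s ∈ Set.Icc a b, 0 < v s)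
    (hdom : ∀ x ∈ Set.Icc a b, |y x| ≤ ∫ t in a..x, Φ x t * |h t|)
    (α β : ℝ) (hα : 0 < α) (hα2 : α < 2) (hβ : 0 < β)
    (x : ℝ) (hx : x ∈ Set.Icc a b) :
    ∫ s in a..x, u s * |y s| ^ β * |h s| ^ α ≤
      ((α / (α + β)) ^ (α / 2) *
        (∫ s in a..x, (u s ^ (2:ℝ) * v s ^ (-α)) ^ (1 / (2 - α)) *
            (∫ t in a..s, v t ^ (-(1:ℝ)) * Φ s t ^ (2:ℝ)) ^ (β / (2 - α)))
          ^ ((2 - α) / 2)) *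
      (∫ s in a..x, v s * |h s| ^ (2:ℝ)) ^ ((α + β) / 2) := by
  -- retraction onto `[a, b]`
  set pr : ℝ → ℝ := fun t => max a (min b t) with hpr
  have hprc : Continuous pr := continuous_const.max (continuous_const.min continuous_id)
  have hprmem : ∀ t, pr t ∈ Set.Icc a b :=
    fun t => ⟨le_max_left _ _, max_le hab (min_le_left _ _)⟩
  have hprid : ∀ t ∈ Set.Icc a b, pr t = t := by
    intro t ht
    rw [hpr]
    simp only [min_eq_right ht.2, max_eq_right ht.1]
  -- extended functions
  set Φ' : ℝ → ℝ → ℝ := fun s t => Φ (pr s) (pr t) with hΦ'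
  set y' : ℝ → ℝ := fun t => y (pr t) with hy'
  set h' : ℝ → ℝ := fun t => h (pr t) with hh'
  set u' : ℝ → ℝ := fun t => u (pr t) with hu'
  set v' : ℝ → ℝ := fun t => v (pr t) with hv'
  have hΦ'c : Continuous fun p : ℝ × ℝ => Φ' p.1 p.2 :=
    hΦc.comp_continuous ((hprc.comp continuous_fst).prodMk (hprc.comp continuous_snd))
      fun p => ⟨hprmem _, hprmem _⟩
  have hy'c : Continuous y' := hy.comp_continuous hprc hprmem
  have hh'c : Continuous h' := hh.comp_continuous hprc hprmem
  have hu'c : Continuous u' := hu.comp_continuous hprc hprmem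
  have hv'c : Continuous v' := hv.comp_continuous hprc hprmem
  have hax : a ≤ x := hx.1
  have hsub : Set.Icc a x ⊆ Set.Icc a b := Set.Icc_subset_Icc le_rfl hx.2
  have hdom' : ∀ s ∈ Set.Icc a x, |y' s| ≤ ∫ t in a..s, Φ' s t * |h' t| := by
    intro s hs
    have hs' : s ∈ Set.Icc a b := hsub hs
    have e : (∫ t in a..s, Φ s t * |h t|) = ∫ t in a..s, Φ' s t * |h' t| := by
      refine intervalIntegral.integral_congr fun t ht => ?_
      have ht' : t ∈ Set.Icc a b := by
        rw [Set.uIcc_of_le hs.1] at ht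
        exact hsub (Set.Icc_subset_Icc le_rfl hs.2 ht)
      simp only [hΦ', hh', hprid t ht', hprid s hs']
    rw [← e]
    simp only [hy', hprid s hs']
    exact hdom s hs'
  have main := opial_main a x hax Φ' hΦ'c
    (fun s t => hΦ0 _ (hprmem s) _ (hprmem t)) y' h' u' v'
    hy'c hh'c hu'c hv'c (fun s => hu0 _ (hprmem s)) (fun s => hv0 _ (hprmem s))
    hdom' α β hα hα2 hβ
  -- transfer the conclusion back to the original functions
  have mem : ∀ t ∈ Set.uIcc a x, t ∈ Set.Icc a b := by
    intro t ht
    rw [Set.uIcc_of_le hax] at ht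
    exact hsub ht
  have eL : (∫ s in a..x, u s * |y s| ^ β * |h s| ^ α) =
      ∫ s in a..x, u' s * |y' s| ^ β * |h' s| ^ α := by
    refine intervalIntegral.integral_congr fun s hs => ?_
    have hs' := mem s hs
    simp only [hu', hy', hh', hprid s hs']
  have eA : (∫ s in a..x, (u s ^ (2:ℝ) * v s ^ (-α)) ^ (1 / (2 - α)) *
        (∫ t in a..s, v t ^ (-(1:ℝ)) * Φ s t ^ (2:ℝ)) ^ (β / (2 - α))) =
      ∫ s in a..x, (u' s ^ (2:ℝ) * v' s ^ (-α)) ^ (1 / (2 - α)) *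
        (∫ t in a..s, v' t ^ (-(1:ℝ)) * Φ' s t ^ (2:ℝ)) ^ (β / (2 - α)) := by
    refine intervalIntegral.integral_congr fun s hs => ?_
    have hs' := mem s hs
    have eI : (∫ t in a..s, v t ^ (-(1:ℝ)) * Φ s t ^ (2:ℝ)) =
        ∫ t in a..s, v' t ^ (-(1:ℝ)) * Φ' s t ^ (2:ℝ) := by
      refine intervalIntegral.integral_congr fun t ht => ?_
      have ht' : t ∈ Set.Icc a b := by
        rw [Set.uIcc_of_le ((Set.uIcc_of_le hax ▸ hs).1)] at ht
        exact hsub (Set.Icc_subset_Icc le_rfl (Set.uIcc_of_le hax ▸ hs).2 ht)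
      simp only [hv', hΦ', hprid t ht', hprid s hs']
    rw [eI]
    simp only [hu', hv', hprid s hs']
  have eZ : (∫ s in a..x, v s * |h s| ^ (2:ℝ)) = ∫ s in a..x, v' s * |h' s| ^ (2:ℝ) := by
    refine intervalIntegral.integral_congr fun s hs => ?_
    have hs' := mem s hs
    simp only [hv', hh', hprid s hs']
  rw [eL, eA, eZ]
  exact main
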